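/- Let ω = e^{2πi/5}, let s₁ᴿ, s₂ᴿ ∈ ℝ, and set s₁ = ω²·s₁ᴿ and s₂ = ω⁴·s₂ᴿ. Define p(λ) = λ⁵ − s₁λ⁴ − s₂λ³ + conj(s₂)λ² + conj(s₁)λ − 1. If λ ∈ ℂ satisfies p(λ) = 0, then λ ≠ 0 and p(1/(ωλ)) = 0, i.e. the roots of p are invariant under the map λ ↦ 1/(ωλ). -/
import Mathlib

lemma aux_root_sym (w l a b : ℂ) (hw : w ^ 5 = 1) (hwne : w ≠ 0) (hl : l ≠ 0)
    (h : l ^ 5 - w ^ 2 * a * l ^ 4 - w ^ 4 * b * l ^ 3 + w * b * l ^ 2 + w ^ 3 * a * l - 1 = 0) :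
    (1 / (w * l)) ^ 5 - w ^ 2 * a * (1 / (w * l)) ^ 4 - w ^ 4 * b * (1 / (w * l)) ^ 3 +
      w * b * (1 / (w * l)) ^ 2 + w ^ 3 * a * (1 / (w * l)) - 1 = 0 := by
  set m : ℂ := 1 / (w * l) with hmdef
  have hm : m * (w * l) = 1 := by
    rw [hmdef]; field_simp
  set u : ℂ := m * w * l with hudef
  linear_combination (-(m ^ 5)) * h + (m ^ 5 * (a * w ^ 2 * l ^ 4 - b * w * l ^ 2 - l ^ 5)) * hw +
    (m ^ 5 * ((1 + u + u ^ 2 + u ^ 3 + u ^ 4) - w ^ 3 * a * l * (1 + u + u ^ 2 + u ^ 3) -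
        w ^ 6 * b * l ^ 2 * (1 + u + u ^ 2) + w ^ 4 * b * l ^ 3 * (u + 1) + w ^ 7 * a * l ^ 4) -
      (m ^ 5 - w ^ 2 * a * m ^ 4 - w ^ 4 * b * m ^ 3 + w * b * m ^ 2 + w ^ 3 * a * m - 1) *
        (1 + u + u ^ 2 + u ^ 3 + u ^ 4)) * hm

/-- Case 5a: with `ω = e^{2πi/5}`, `s₁ = ω² s₁ᴿ`, `s₂ = ω⁴ s₂ᴿ` (`s₁ᴿ, s₂ᴿ` real),
the roots of `p(λ) = λ⁵ − s₁λ⁴ − s₂λ³ + conj(s₂)λ² + conj(s₁)λ − 1` are invariant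
under `λ ↦ 1/(ωλ)`. -/
theorem root_symmetry_case5a (s₁R s₂R : ℝ) :
    let ω : ℂ := Complex.exp (2 * Real.pi * Complex.I / 5)
    let s₁ : ℂ := ω ^ 2 * (s₁R : ℂ)
    let s₂ : ℂ := ω ^ 4 * (s₂R : ℂ)
    let p : ℂ → ℂ := fun lam =>
      lam ^ 5 - s₁ * lam ^ 4 - s₂ * lam ^ 3 + (starRingEnd ℂ) s₂ * lam ^ 2 +
        (starRingEnd ℂ) s₁ * lam - 1
    ∀ lam : ℂ, p lam = 0 → lam ≠ 0 ∧ p (1 / (ω * lam)) = 0 := by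
  intro ω s₁ s₂ p lam h
  have hω5 : ω ^ 5 = 1 := by
    show Complex.exp _ ^ 5 = 1
    rw [← Complex.exp_nat_mul]
    have h5 : (5 : ℂ) * (2 * Real.pi * Complex.I / 5) = 2 * Real.pi * Complex.I := by ring
    push_cast
    rw [h5]
    simpa [mul_comm, mul_assoc] using Complex.exp_two_pi_mul_I
  have hωne : ω ≠ 0 := Complex.exp_ne_zero _
  have hconj : (starRingEnd ℂ) ω = ω ^ 4 := by
    have h1 : (starRingEnd ℂ) ω * ω = 1 := by
      show (starRingEnd ℂ) (Complex.exp _) * Complex.exp _ = 1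
      rw [← Complex.exp_conj, ← Complex.exp_add]
      have he : (starRingEnd ℂ) (2 * Real.pi * Complex.I / 5) +
          2 * Real.pi * Complex.I / 5 = 0 := by
        simp only [map_div₀, map_mul, Complex.conj_I, Complex.conj_ofReal, map_ofNat]
        ring
      rw [he, Complex.exp_zero]
    have h2 : ω ^ 4 * ω = 1 := by rw [← pow_succ]; exact hω5
    have := h1.trans h2.symm
    exact mul_right_cancel₀ hωne this
  have hlamne : lam ≠ 0 := by
    intro h0
    simp only [p, s₁, s₂, h0] at h
    norm_num at h
  refine ⟨hlamne, ?_⟩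
  have hcs₁ : (starRingEnd ℂ) s₁ = ω ^ 3 * (s₁R : ℂ) := by
    simp only [s₁, map_mul, map_pow, hconj, Complex.conj_ofReal]
    rw [show (ω ^ 4) ^ 2 = ω ^ 5 * ω ^ 3 by ring, hω5, one_mul]
  have hcs₂ : (starRingEnd ℂ) s₂ = ω * (s₂R : ℂ) := by
    simp only [s₂, map_mul, map_pow, hconj, Complex.conj_ofReal]
    rw [show (ω ^ 4) ^ 4 = (ω ^ 5) ^ 3 * ω by ring, hω5, one_pow, one_mul]
  simp only [p, s₁, s₂, hcs₁, hcs₂] at h ⊢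
  exact aux_root_sym ω lam (s₁R : ℂ) (s₂R : ℂ) hω5 hωne hlamne h
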